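/- Let R be a principal ideal domain that is not a field. If R has infinitely many pairwise non-associate prime elements, then the set of prime elements is dense in the Macías topology on R \ {0}. -/

import Mathlib

/-- For nonzero `k`, the basic set `σₖ⁰ = {s ≠ 0 : ⟨k⟩ + ⟨s⟩ = R}` of the Macías topology. -/
def sigma0 (R : Type*) [CommRing R] (k : R) : Set {x : R // x ≠ 0} :=
  {s | Ideal.span {k} + Ideal.span {s.1} = ⊤}

/-- The Macías topology on `R \ {0}`, generated by the sets `σₖ⁰` for `k ≠ 0`. -/
def maciasTop (R : Type*) [CommRing R] : TopologicalSpace {x : R // x ≠ 0} :=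
  TopologicalSpace.generateFrom {U | ∃ k : R, k ≠ 0 ∧ U = sigma0 R k}

/-- In a PID with infinitely many pairwise non-associate primes, every nonzero element
has a prime not dividing it. -/
theorem exists_prime_not_dvd_aux (R : Type*) [CommRing R] [IsDomain R] [IsPrincipalIdealRing R]
    (hinf : (Associates.mk '' {p : R | Prime p}).Infinite)
    {K : R} (hK : K ≠ 0) : ∃ p : R, Prime p ∧ ¬ p ∣ K := by
  classical
  letI : NormalizationMonoid R := UniqueFactorizationMonoid.normalizationMonoid.toNormalizationMonoid
  let F : Finset (Associates R) :=
    ((UniqueFactorizationMonoid.normalizedFactors K).map Associates.mk).toFinset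
  obtain ⟨a, ⟨p, hp, rfl⟩, haF⟩ := hinf.exists_notMem_finset F
  refine ⟨p, hp, fun hdvd => haF ?_⟩
  obtain ⟨q, hq, hassoc⟩ :=
    UniqueFactorizationMonoid.exists_mem_normalizedFactors_of_dvd hK hp.irreducible hdvd
  have : Associates.mk p = Associates.mk q := Associates.mk_eq_mk_iff_associated.mpr hassoc
  rw [this]
  simpa [F] using Multiset.mem_map_of_mem Associates.mk hq

theorem stmt13 (R : Type*) [CommRing R] [IsDomain R] [IsPrincipalIdealRing R]
    (hnf : ¬ IsField R)
    (hinf : (Associates.mk '' {p : R | Prime p}).Infinite) :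
    @Dense _ (maciasTop R) {x : {x : R // x ≠ 0} | Prime x.1} := by
  classical
  letI := maciasTop R
  have hgen : maciasTop R =
      TopologicalSpace.generateFrom {U | ∃ k : R, k ≠ 0 ∧ U = sigma0 R k} := rfl
  have hbasis := TopologicalSpace.isTopologicalBasis_of_subbasis hgen
  rw [hbasis.dense_iff]
  rintro o ⟨f, ⟨hfin, hsub⟩, rfl⟩ _
  -- choose for each U ∈ f a nonzero k with U = sigma0 R k
  choose g hg0 hgU using fun U (hU : U ∈ f) => hsub hU
  haveI := hfin.fintype
  set K : R := ∏ U : f, g U.1 U.2 with hKdef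
  have hK : K ≠ 0 := Finset.prod_ne_zero_iff.mpr fun U _ => hg0 U.1 U.2
  obtain ⟨p, hp, hpdvd⟩ := exists_prime_not_dvd_aux R hinf hK
  refine ⟨⟨p, hp.ne_zero⟩, ?_, hp⟩
  intro U hU
  rw [hgU U hU]
  have hdvd : g U hU ∣ K := Finset.dvd_prod_of_mem _ (Finset.mem_univ (⟨U, hU⟩ : f))
  have hcop : IsCoprime (g U hU) p :=
    ((hp.coprime_iff_not_dvd).mpr (fun h => hpdvd (h.trans hdvd))).symm
  show Ideal.span {g U hU} + Ideal.span {p} = ⊤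
  exact Ideal.isCoprime_iff_sup_eq.mp ((Ideal.isCoprime_span_singleton_iff _ _).mpr hcop)
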